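/- In the high-transfer-price setting, regard the optimal transfer price as a function of the tax rate of the harmed country: P(t) := p̄ + ((t−τ₁)/((1−exp(−λ))·(1+z)·t·(1+1/γ)))^γ · (p^∨ − p̄) for t ∈ (τ₁, 1]. Then at each such t, P has derivative equal to [γ·(p^∨−p̄)/((1−exp(−λ))·(1+z)·(1+1/γ))^γ] · (t − (t−τ₁)) / (t^(1+γ)·(t−τ₁)^(1−γ)); moreover this derivative is strictly positive whenever τ₁ > 0, and equals zero for all t when τ₁ = 0. -/

import Mathlib

open Real Set Filter Topology

/-- In the high-transfer-price setting, the optimal transfer price viewed as a function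
`P` of the harmed country's tax rate has, at each `t ∈ (τ₁,1]`, derivative
`[γ·(p^∨−p̄)/((1−exp(−λ))·(1+z)·(1+1/γ))^γ] · (t−(t−τ₁))/(t^(1+γ)·(t−τ₁)^(1−γ))`;
this derivative is strictly positive whenever `τ₁ > 0` and vanishes identically
when `τ₁ = 0`. -/
theorem stmt4 (τ₁ lam z γ pbar pvee : ℝ)
    (hτ₁ : 0 ≤ τ₁) (hτ₁' : τ₁ < 1)
    (hlam : 0 < lam) (hz : 0 < z) (hγ : γ ∈ Set.Ioc (0 : ℝ) 1) (hp : pbar < pvee)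
    (P : ℝ → ℝ)
    (hP : P = fun t => pbar +
      ((t - τ₁) / ((1 - Real.exp (-lam)) * (1 + z) * t * (1 + 1 / γ))) ^ γ * (pvee - pbar))
    (D : ℝ → ℝ)
    (hD : D = fun t => γ * (pvee - pbar) /
        ((1 - Real.exp (-lam)) * (1 + z) * (1 + 1 / γ)) ^ γ *
      ((t - (t - τ₁)) / (t ^ (1 + γ) * (t - τ₁) ^ (1 - γ)))) :
    (∀ t ∈ Set.Ioc τ₁ 1, HasDerivAt P (D t) t) ∧
    (0 < τ₁ → ∀ t ∈ Set.Ioc τ₁ 1, 0 < D t) ∧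
    (τ₁ = 0 → ∀ t ∈ Set.Ioc τ₁ 1, D t = 0) := by
  obtain ⟨hγ0, hγ1⟩ := hγ
  set A : ℝ := (1 - Real.exp (-lam)) * (1 + z) with hA
  set B : ℝ := 1 + 1 / γ with hB
  have hApos : 0 < A := by
    have : Real.exp (-lam) < 1 := Real.exp_lt_one_iff.mpr (by linarith)
    have : 0 < 1 - Real.exp (-lam) := by linarith
    positivity
  have hBpos : 0 < B := by
    have h : 0 < 1 / γ := by positivity
    rw [hB]; linarith
  have hCpos : 0 < A * B := mul_pos hApos hBpos
  refine ⟨?_, ?_, ?_⟩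
  · intro t ht
    obtain ⟨ht1, ht2⟩ := ht
    have htpos : 0 < t := lt_of_le_of_lt hτ₁ ht1
    have hspos : 0 < t - τ₁ := by linarith
    have hupos : 0 < (t - τ₁) / (A * t * B) := by positivity
    -- derivative of the inner function
    have hg : HasDerivAt (fun t : ℝ => (t - τ₁) / (A * t * B))
        (τ₁ / (A * B * t ^ 2)) t := by
      have h1 : HasDerivAt (fun t : ℝ => t - τ₁) 1 t := by
        simpa using (hasDerivAt_id t).sub_const τ₁
      have h2 : HasDerivAt (fun t : ℝ => A * t * B) (A * B) t := by
        have := ((hasDerivAt_id t).const_mul A).mul_const B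
        simpa [mul_comm, mul_left_comm] using this
      have hne : A * t * B ≠ 0 := by positivity
      have := h1.div h2 hne
      have e : τ₁ / (A * B * t ^ 2)
          = (1 * (A * t * B) - (t - τ₁) * (A * B)) / (A * t * B) ^ 2 := by
        rw [div_eq_div_iff (by positivity) (by positivity)]
        ring
      rw [e]
      exact this
    have hgp : HasDerivAt (fun t : ℝ => ((t - τ₁) / (A * t * B)) ^ γ)
        (τ₁ / (A * B * t ^ 2) * γ * ((t - τ₁) / (A * t * B)) ^ (γ - 1)) t :=
      hg.rpow_const (Or.inl (ne_of_gt hupos))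
    have hPd : HasDerivAt P
        (τ₁ / (A * B * t ^ 2) * γ * ((t - τ₁) / (A * t * B)) ^ (γ - 1) * (pvee - pbar)) t := by
      rw [hP]
      exact (hgp.mul_const (pvee - pbar)).const_add pbar
    convert hPd using 1
    rw [hD]
    simp only
    have e1 : ((t - τ₁) / (A * t * B)) ^ (γ - 1)
        = (t - τ₁) ^ γ / (t - τ₁) / ((A * B) ^ γ * t ^ γ / (A * B * t)) := by
      rw [Real.div_rpow hspos.le (by positivity), Real.rpow_sub hspos,
        Real.rpow_sub (by positivity : (0:ℝ) < A * t * B), Real.rpow_one, Real.rpow_one]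
      have : A * t * B = (A * B) * t := by ring
      rw [this, Real.mul_rpow hCpos.le htpos.le]
    have e2 : t ^ (1 + γ) = t * t ^ γ := by
      rw [Real.rpow_add htpos, Real.rpow_one]
    have e3 : (t - τ₁) ^ (1 - γ) = (t - τ₁) / (t - τ₁) ^ γ := by
      rw [Real.rpow_sub hspos, Real.rpow_one]
    rw [e1, e2, e3]
    have h4 : (t - τ₁) ^ γ ≠ 0 := by positivity
    have h5 : t ^ γ ≠ 0 := by positivity
    have h6 : (A * B) ^ γ ≠ 0 := by positivity
    have h7 : t ≠ 0 := ne_of_gt htpos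
    have h8 : t - τ₁ ≠ 0 := ne_of_gt hspos
    have h9 : A * B ≠ 0 := ne_of_gt hCpos
    field_simp
    ring
  · intro hτpos t ht
    obtain ⟨ht1, ht2⟩ := ht
    have htpos : 0 < t := lt_of_le_of_lt hτ₁ ht1
    have hspos : 0 < t - τ₁ := by linarith
    rw [hD]
    simp only
    have h1 : 0 < γ * (pvee - pbar) / ((A * B) ^ γ) := by
      have : 0 < pvee - pbar := by linarith
      positivity
    have h2 : 0 < (t - (t - τ₁)) / (t ^ (1 + γ) * (t - τ₁) ^ (1 - γ)) := by
      have : t - (t - τ₁) = τ₁ := by ring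
      rw [this]
      positivity
    have : A * t * B = (A * B) * t := by ring
    calc 0 < γ * (pvee - pbar) / ((A * B) ^ γ)
          * ((t - (t - τ₁)) / (t ^ (1 + γ) * (t - τ₁) ^ (1 - γ))) := mul_pos h1 h2
      _ = _ := by ring_nf
  · intro hτ0 t ht
    rw [hD]
    simp [hτ0]
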